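/- Let d, K, N be positive integers with K ≤ d and N ≥ 2, and let X_1, …, X_N ∈ ℂ^{d×K} be matrices with orthonormal columns (X_nᴴ X_n = I_K for each n). Then the squared chordal packing diameter satisfies min_{m ≠ n} (K − ‖X_mᴴ X_n‖_F²) ≤ (K(d − K)/d) · (N/(N − 1)). -/

import Mathlib

open scoped Matrix

/-- The squared Frobenius norm of a complex matrix:
`‖A‖_F² = trace(AᴴA) = ∑ᵢⱼ |Aᵢⱼ|²`. -/
noncomputable def frobNormSq {m n : Type*} [Fintype m] [Fintype n]
    (A : Matrix m n ℂ) : ℝ :=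
  ∑ i, ∑ j, ‖A i j‖ ^ 2

lemma trace_hA {m n : Type*} [Fintype m] [Fintype n] (A : Matrix m n ℂ) :
    (Aᴴ * A).trace = (frobNormSq A : ℂ) := by
  unfold frobNormSq
  simp only [Matrix.trace, Matrix.diag, Matrix.mul_apply, Matrix.conjTranspose_apply]
  rw [Finset.sum_comm]
  push_cast
  congr 1; funext i; congr 1; funext j
  rw [mul_comm]
  rw [show (star (A i j) : ℂ) = (starRingEnd ℂ) (A i j) from rfl, Complex.mul_conj]
  rw [Complex.normSq_eq_norm_sq]; norm_cast

/-- **Rankin bound for the chordal distance** (Conway–Hardin–Sloane):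
for `N ≥ 2` subspaces of `ℂ^d`, each of dimension `K`, represented by matrices with
orthonormal columns, the squared chordal packing diameter
`min_{m ≠ n} (K − ‖X_mᴴ X_n‖_F²)` is at most `(K(d−K)/d)·(N/(N−1))`. -/
theorem rankin_bound_chordal (d K N : ℕ) (hd : 0 < d) (hK : 0 < K) (hKd : K ≤ d)
    (hN : 2 ≤ N) (X : Fin N → Matrix (Fin d) (Fin K) ℂ)
    (hX : ∀ n, (X n)ᴴ * X n = 1) :
    ∃ m n : Fin N, m ≠ n ∧
      (K : ℝ) - frobNormSq ((X m)ᴴ * X n) ≤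
        ((K : ℝ) * ((d : ℝ) - K) / d) * ((N : ℝ) / ((N : ℝ) - 1)) := by
  set c : Fin N → Fin N → ℝ := fun m n => frobNormSq ((X m)ᴴ * X n) with hc
  set P : Fin N → Matrix (Fin d) (Fin d) ℂ := fun n => X n * (X n)ᴴ with hP
  set S : Matrix (Fin d) (Fin d) ℂ := ∑ n, P n with hS
  -- trace of pairwise products
  have trace_pair : ∀ m n, (P m * P n).trace = (c m n : ℂ) := by
    intro m n
    have h1 : (P m * P n).trace = (((X m)ᴴ * X n)ᴴ * ((X m)ᴴ * X n)).trace := by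
      rw [Matrix.conjTranspose_mul, Matrix.conjTranspose_conjTranspose]
      rw [Matrix.trace_mul_comm ((X n)ᴴ * X m)]
      simp only [hP, Matrix.mul_assoc]
      rw [Matrix.trace_mul_comm (X m)]
      simp only [Matrix.mul_assoc]
    rw [h1, trace_hA]
  -- S is Hermitian
  have hSH : Sᴴ = S := by
    rw [hS, Matrix.conjTranspose_sum]
    congr 1; funext n
    simp [hP, Matrix.conjTranspose_mul]
  -- trace S = N*K
  have htrS : S.trace = ((N : ℝ) * K : ℝ) := by
    rw [hS, Matrix.trace_sum]
    have : ∀ n, (P n).trace = (K : ℂ) := by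
      intro n
      rw [hP, Matrix.trace_mul_comm, hX, Matrix.trace_one]
      simp
    simp [this]
  -- T := total sum of c
  set T : ℝ := ∑ m, ∑ n, c m n with hT
  have htrSS : (S * S).trace = (T : ℂ) := by
    rw [hS, Finset.sum_mul_sum]
    rw [Matrix.trace_sum]
    simp_rw [Matrix.trace_sum, trace_pair]
    push_cast [hT]
    rfl
  have hTfrob : T = frobNormSq S := by
    have := trace_hA S
    rw [hSH, htrSS] at this
    exact_mod_cast this
  -- Cauchy-Schwarz on the diagonal
  have hCS : (S.trace.re) ^ 2 ≤ (d : ℝ) * frobNormSq S := by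
    have h1 : S.trace.re = ∑ i, (S i i).re := by
      simp [Matrix.trace, Matrix.diag, Complex.re_sum]
    have h2 : (∑ i, (S i i).re) ^ 2 ≤ (d : ℝ) * ∑ i, (S i i).re ^ 2 := by
      have := sq_sum_le_card_mul_sum_sq (s := (Finset.univ : Finset (Fin d)))
        (f := fun i => (S i i).re)
      simpa using this
    have h3 : ∑ i, (S i i).re ^ 2 ≤ frobNormSq S := by
      unfold frobNormSq
      apply Finset.sum_le_sum
      intro i _
      calc (S i i).re ^ 2 ≤ ‖S i i‖ ^ 2 := by
            rw [Complex.sq_norm, Complex.normSq_apply]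
            nlinarith [sq_nonneg (S i i).im]
        _ ≤ ∑ j, ‖S i j‖ ^ 2 := by
            apply Finset.single_le_sum (f := fun j => ‖S i j‖ ^ 2)
            · intro j _; positivity
            · exact Finset.mem_univ i
    calc (S.trace.re) ^ 2 = (∑ i, (S i i).re) ^ 2 := by rw [h1]
      _ ≤ (d : ℝ) * ∑ i, (S i i).re ^ 2 := h2
      _ ≤ (d : ℝ) * frobNormSq S := by
          apply mul_le_mul_of_nonneg_left h3 (by positivity)
  have hmain : ((N : ℝ) * K) ^ 2 ≤ (d : ℝ) * T := by
    rw [hTfrob]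
    have : S.trace.re = (N : ℝ) * K := by rw [htrS]; simp
    rw [← this]; exact hCS
  -- diagonal values
  have hcmm : ∀ m, c m m = (K : ℝ) := by
    intro m
    simp only [hc, hX m]
    unfold frobNormSq
    simp only [Matrix.one_apply]
    have h1 : ∀ x : Fin K, ∑ y : Fin K, ‖(if x = y then (1:ℂ) else 0)‖ ^ 2 = 1 := by
      intro x
      rw [Finset.sum_eq_single x]
      · simp
      · intro b _ hb; simp [Ne.symm hb]
      · simp
    rw [Finset.sum_congr rfl fun x _ => h1 x]
    simp
  set B : ℝ := ((K : ℝ) * ((d : ℝ) - K) / d) * ((N : ℝ) / ((N : ℝ) - 1)) with hB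
  by_contra hcon
  push_neg at hcon
  have hcon' : ∀ m n : Fin N, m ≠ n → c m n < (K : ℝ) - B := by
    intro m n hmn
    have := hcon m n hmn
    linarith
  have hdR : (0:ℝ) < d := by exact_mod_cast hd
  have hN1 : (1:ℝ) ≤ (N : ℝ) - 1 := by
    have : (2:ℝ) ≤ N := by exact_mod_cast hN
    linarith
  -- bound T strictly
  have hTbound : T < (N : ℝ) * ((K : ℝ) + ((N : ℝ) - 1) * ((K : ℝ) - B)) := by
    rw [hT]
    have hrow : ∀ m : Fin N, ∑ n, c m n < (K : ℝ) + ((N : ℝ) - 1) * ((K : ℝ) - B) := by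
      intro m
      rw [← Finset.add_sum_erase Finset.univ (c m) (Finset.mem_univ m), hcmm m]
      have hcard : ((Finset.univ : Finset (Fin N)).erase m).card = N - 1 := by
        rw [Finset.card_erase_of_mem (Finset.mem_univ m)]
        simp
      have hne : ((Finset.univ : Finset (Fin N)).erase m).Nonempty := by
        rw [← Finset.card_pos, hcard]
        omega
      have : ∑ n ∈ Finset.univ.erase m, c m n <
          ∑ n ∈ Finset.univ.erase m, ((K : ℝ) - B) := by
        apply Finset.sum_lt_sum_of_nonempty hne
        intro n hn
        exact hcon' m n (Finset.ne_of_mem_erase hn).symm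
      rw [Finset.sum_const, hcard, nsmul_eq_mul] at this
      have hcast : ((N - 1 : ℕ) : ℝ) = (N : ℝ) - 1 := by
        have : 1 ≤ N := by omega
        push_cast [this]; ring
      rw [hcast] at this
      linarith [this]
    calc ∑ m, ∑ n, c m n < ∑ m : Fin N, ((K : ℝ) + ((N : ℝ) - 1) * ((K : ℝ) - B)) := by
          apply Finset.sum_lt_sum_of_nonempty
          · exact Finset.univ_nonempty_iff.mpr ⟨⟨0, by omega⟩⟩
          · intro m _; exact hrow m
      _ = (N : ℝ) * ((K : ℝ) + ((N : ℝ) - 1) * ((K : ℝ) - B)) := by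
          rw [Finset.sum_const, Finset.card_univ, Fintype.card_fin, nsmul_eq_mul]
  -- arithmetic contradiction
  have heq : (d : ℝ) * ((N : ℝ) * ((K : ℝ) + ((N : ℝ) - 1) * ((K : ℝ) - B))) =
      ((N : ℝ) * K) ^ 2 := by
    rw [hB]
    field_simp
    ring
  have : (d : ℝ) * T < ((N : ℝ) * K) ^ 2 := by
    calc (d : ℝ) * T < (d : ℝ) * ((N : ℝ) * ((K : ℝ) + ((N : ℝ) - 1) * ((K : ℝ) - B))) :=
          by exact mul_lt_mul_of_pos_left hTbound hdR
      _ = ((N : ℝ) * K) ^ 2 := heq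
  linarith
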